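/- arXiv:0907.0942 — 3 statements merged into one kernel-verified Lean document; each statement's English description precedes it below -/
import Mathlib

section
/- Under the Setup with Hypotheses (H2) and (H3), for every w ∈ adh(L) one has lim_{n→∞} val_S(w[0,n−1]) / v_{q₀}(n) = α_w, where α_w := lim_{ℓ→∞} α_{w[0,ℓ−1]}. -/
open Filter Topology

/-- The prefix of length `ℓ` of an infinite word `w : ℕ → A`. -/
def prefixOf {A : Type*} (w : ℕ → A) (ℓ : ℕ) : List A := List.ofFn (fun i : Fin ℓ => w i)

/-- The set of prefixes of words of a language `L`. -/
def pref {A : Type*} (L : Set (List A)) : Set (List A) := {u | ∃ v ∈ L, u <+: v}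

/-- The adherence of a language. -/
def adh {A : Type*} (L : Set (List A)) : Set (ℕ → A) :=
  {w | ∀ ℓ : ℕ, prefixOf w ℓ ∈ pref L}

/-- The center of a language: the finite prefixes of elements of the adherence. -/
def centre {A : Type*} (L : Set (List A)) : Set (List A) :=
  {u | ∃ w ∈ adh L, u = prefixOf w u.length}

/-- Transition function of a deterministic automaton extended to words. -/
def deltaStar {Q A : Type*} (δ : Q → A → Q) (q : Q) (w : List A) : Q := w.foldl δ q

/-- `ucomp δ F q n` : number of words of length `n` accepted from state `q`. -/
noncomputable def ucomp {Q A : Type*} (δ : Q → A → Q) (F : Set Q) (q : Q) (n : ℕ) : ℕ :=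
  {z : List A | z.length = n ∧ deltaStar δ q z ∈ F}.ncard

/-- `vcomp δ F q n` : number of words of length at most `n` accepted from state `q`. -/
noncomputable def vcomp {Q A : Type*} (δ : Q → A → Q) (F : Set Q) (q : Q) (n : ℕ) : ℕ :=
  ∑ m ∈ Finset.range (n + 1), ucomp δ F q m

open scoped Classical in
/-- For a word `y`, `alphaFin L r y = s₀ + Σ_{x ∈ centre(L), |x| = |y|, x <_lex y} r x`
where `s₀ = 1 - r ε`.  (Words of length `|y|` are enumerated as `List.ofFn f`
for `f : Fin |y| → A`.) -/
noncomputable def alphaFin {A : Type*} [Fintype A] [LinearOrder A]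
    (L : Set (List A)) (r : List A → ℝ) (y : List A) : ℝ :=
  (1 - r []) +
    ∑ f : Fin y.length → A,
      if List.ofFn f ∈ centre L ∧ List.Lex (· < ·) (List.ofFn f) y then r (List.ofFn f)
      else 0

/-- Genealogical (radix) order: first by length, then lexicographically. -/
def genLt {A : Type*} [LinearOrder A] (x y : List A) : Prop :=
  x.length < y.length ∨ (x.length = y.length ∧ List.Lex (· < ·) x y)

/-- The `S`-numerical value of a word `w` of `L`: the number of words of `L`
genealogically smaller than `w`. -/
noncomputable def valS {A : Type*} [LinearOrder A] (L : Set (List A)) (w : List A) : ℕ :=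
  {x ∈ L | genLt x w}.ncard

section Aux
set_option linter.unusedSectionVars false
open Finset
variable {Γ : Type*} [Fintype Γ] [LinearOrder Γ] {Q : Type*}

lemma deltaStar_append (δ : Q → Γ → Q) (q : Q) (x y : List Γ) :
    deltaStar δ q (x ++ y) = deltaStar δ (deltaStar δ q x) y :=
  List.foldl_append

lemma deltaStar_cons (δ : Q → Γ → Q) (q : Q) (a : Γ) (x : List Γ) :
    deltaStar δ q (a :: x) = deltaStar δ (δ q a) x := rfl

open scoped Classical in
lemma ncard_len (n : ℕ) (P : List Γ → Prop) :
    {z : List Γ | z.length = n ∧ P z}.ncard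
      = (univ.filter fun f : Fin n → Γ => P (List.ofFn f)).card := by
  have himg : {z : List Γ | z.length = n ∧ P z}
      = List.ofFn '' {f : Fin n → Γ | P (List.ofFn f)} := by
    ext z
    constructor
    · rintro ⟨h1, h2⟩
      subst h1
      exact ⟨z.get, by simpa [List.ofFn_get] using h2, List.ofFn_get z⟩
    · rintro ⟨f, hf, rfl⟩
      exact ⟨List.length_ofFn, hf⟩
  rw [himg, Set.ncard_image_of_injective _ List.ofFn_injective,
    Set.ncard_eq_toFinset_card', Set.toFinset_setOf]

lemma finite_len (n : ℕ) (P : List Γ → Prop) :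
    {z : List Γ | z.length = n ∧ P z}.Finite := by
  classical
  have himg : {z : List Γ | z.length = n ∧ P z}
      ⊆ List.ofFn '' (Set.univ : Set (Fin n → Γ)) := by
    rintro z ⟨h1, h2⟩
    subst h1
    exact ⟨z.get, trivial, List.ofFn_get z⟩
  exact Set.Finite.subset ((Set.finite_univ).image _) himg

lemma card_filter_succ (n : ℕ) (P : (Fin (n+1) → Γ) → Prop) [DecidablePred P]
    [∀ a : Γ, DecidablePred fun g : Fin n → Γ => P (Fin.cons a g)] :
    (univ.filter P).card = ∑ a : Γ, (univ.filter fun g : Fin n → Γ => P (Fin.cons a g)).card := by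
  rw [← Fintype.card_subtype]
  have e : {f : Fin (n+1) → Γ // P f} ≃ Σ a : Γ, {g : Fin n → Γ // P (Fin.cons a g)} :=
    (((Fin.consEquiv fun _ => Γ).subtypeEquiv (fun x => Iff.rfl)).symm.trans
      (Equiv.subtypeProdEquivSigmaSubtype fun a g => P (Fin.cons a g)))
  rw [Fintype.card_congr e, Fintype.card_sigma]
  exact Finset.sum_congr rfl fun a _ => Fintype.card_subtype _

open scoped Classical in
lemma ucomp_eq_card (δ : Q → Γ → Q) (F : Set Q) (q : Q) (n : ℕ) :
    ucomp δ F q n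
      = (univ.filter fun f : Fin n → Γ => deltaStar δ q (List.ofFn f) ∈ F).card := by
  classical
  exact ncard_len n _

open scoped Classical in
lemma ucomp_succ (δ : Q → Γ → Q) (F : Set Q) (q : Q) (n : ℕ) :
    ucomp δ F q (n+1) = ∑ a : Γ, ucomp δ F (δ q a) n := by
  classical
  rw [ucomp_eq_card, card_filter_succ]
  refine Finset.sum_congr rfl fun a _ => ?_
  rw [ucomp_eq_card]
  congr 1
  refine Finset.filter_congr fun g _ => ?_
  simp [List.ofFn_succ, deltaStar_cons]

end Aux
section Aux2
set_option linter.unusedSectionVars false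
open Finset
variable {Γ : Type*} [Fintype Γ] [LinearOrder Γ] {Q : Type*}

lemma lex_cons_iff' {a b : Γ} {s t : List Γ} :
    List.Lex (· < ·) (a :: s) (b :: t) ↔ a < b ∨ (a = b ∧ List.Lex (· < ·) s t) := by
  constructor
  · intro h
    cases h with
    | cons h => exact Or.inr ⟨rfl, h⟩
    | rel h => exact Or.inl h
  · rintro (h | ⟨rfl, h⟩)
    · exact List.Lex.rel h
    · exact List.Lex.cons h

lemma not_lex_nil' {s : List Γ} : ¬ List.Lex (· < ·) s ([] : List Γ) := by
  intro h; cases h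

open scoped Classical in
lemma sum_trichotomy {M : Type*} [AddCommMonoid M] (b : Γ) (X Y : Γ → M) :
    (∑ a : Γ, if a < b then X a else if a = b then Y a else 0)
      = (∑ a ∈ univ.filter (· < b), X a) + Y b := by
  rw [← Finset.sum_filter_add_sum_filter_not univ (· < b)]
  congr 1
  · exact Finset.sum_congr rfl fun a ha => by
      rw [if_pos (by simpa using ha)]
  · rw [Finset.sum_eq_single b]
    · rw [if_neg (lt_irrefl b), if_pos rfl]
    · intro a ha hab
      rw [if_neg (by simpa using ha), if_neg hab]
    · intro hb
      simp at hb

open scoped Classical in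
noncomputable def Bg (δ : Q → Γ → Q) (F : Set Q) (q : Q) (g : ℕ → Γ) (n : ℕ) : ℕ :=
  (univ.filter fun f : Fin n → Γ =>
    deltaStar δ q (List.ofFn f) ∈ F ∧
      List.Lex (· < ·) (List.ofFn f) (List.ofFn fun i : Fin n => g i)).card

open scoped Classical in
lemma Bg_succ (δ : Q → Γ → Q) (F : Set Q) (q : Q) (g : ℕ → Γ) (n : ℕ) :
    Bg δ F q g (n+1)
      = (∑ a ∈ univ.filter (· < g 0), ucomp δ F (δ q a) n)
        + Bg δ F (δ q (g 0)) (fun i => g (i+1)) n := by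
  rw [Bg]
  refine (card_filter_succ n (fun f : Fin (n+1) → Γ =>
    deltaStar δ q (List.ofFn f) ∈ F ∧
      List.Lex (· < ·) (List.ofFn f) (List.ofFn fun i : Fin (n+1) => g i))).trans ?_
  have hterm : ∀ a : Γ,
      (univ.filter fun gg : Fin n → Γ =>
        deltaStar δ q (List.ofFn (Fin.cons a gg)) ∈ F ∧
          List.Lex (· < ·) (List.ofFn (Fin.cons a gg))
            (List.ofFn fun i : Fin (n+1) => g i)).card
      = if a < g 0 then ucomp δ F (δ q a) n
        else if a = g 0 then Bg δ F (δ q (g 0)) (fun i => g (i+1)) n else 0 := by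
    intro a
    have hiff : ∀ gg : Fin n → Γ,
        (deltaStar δ q (List.ofFn (Fin.cons a gg)) ∈ F ∧
          List.Lex (· < ·) (List.ofFn (Fin.cons a gg))
            (List.ofFn fun i : Fin (n+1) => g i))
        ↔ (deltaStar δ (δ q a) (List.ofFn gg) ∈ F ∧
            (a < g 0 ∨ (a = g 0 ∧ List.Lex (· < ·) (List.ofFn gg)
              (List.ofFn fun i : Fin n => g (i+1))))) := by
      intro gg
      rw [List.ofFn_succ (f := Fin.cons a gg), List.ofFn_succ (f := fun i : Fin (n+1) => g i)]
      simp only [Fin.cons_zero, Fin.cons_succ, deltaStar_cons, Fin.val_succ, Fin.val_zero]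
      rw [lex_cons_iff']
    rw [Finset.filter_congr fun gg _ => hiff gg]
    rcases lt_trichotomy a (g 0) with h | h | h
    · rw [if_pos h, ucomp_eq_card]
      congr 1
      refine Finset.filter_congr fun gg _ => ?_
      simp [h]
    · subst h
      rw [if_neg (lt_irrefl (g 0)), if_pos rfl, Bg]
      congr 1
      refine Finset.filter_congr fun gg _ => ?_
      simp [lt_irrefl]
    · rw [if_neg (asymm h), if_neg (ne_of_gt h)]
      rw [Finset.filter_false_of_mem, Finset.card_empty]
      intro gg _
      simp only [not_and]
      intro _
      rintro (h1 | ⟨rfl, -⟩)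
      · exact absurd h1 (asymm h)
      · exact lt_irrefl _ h
  calc (∑ a : Γ, (univ.filter fun gg : Fin n → Γ =>
        deltaStar δ q (List.ofFn (Fin.cons a gg)) ∈ F ∧
          List.Lex (· < ·) (List.ofFn (Fin.cons a gg))
            (List.ofFn fun i : Fin (n+1) => g i)).card)
      = ∑ a : Γ, if a < g 0 then ucomp δ F (δ q a) n
          else if a = g 0 then Bg δ F (δ q (g 0)) (fun i => g (i+1)) n else 0 :=
        Finset.sum_congr rfl fun a _ => hterm a
    _ = _ := sum_trichotomy (g 0) _ _

end Aux2
section Aux3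
set_option linter.unusedSectionVars false
open Finset
variable {Γ : Type*} [Fintype Γ] [LinearOrder Γ] {Q : Type*}

lemma ofFn_shift (g : ℕ → Γ) (i : ℕ) :
    (List.ofFn fun j : Fin (i+1) => g j) = g 0 :: (List.ofFn fun j : Fin i => g (j+1)) := by
  rw [List.ofFn_succ]
  simp

lemma Bg_zero (δ : Q → Γ → Q) (F : Set Q) (q : Q) (g : ℕ → Γ) :
    Bg δ F q g 0 = 0 := by
  classical
  rw [Bg, Finset.card_eq_zero, Finset.filter_eq_empty_iff]
  intro f _
  simp only [List.ofFn_zero]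
  rintro ⟨-, h⟩
  exact not_lex_nil' h

lemma Bg_formula (δ : Q → Γ → Q) (F : Set Q) :
    ∀ (n : ℕ) (q : Q) (g : ℕ → Γ), Bg δ F q g n
      = ∑ i ∈ range n, ∑ a ∈ univ.filter (· < g i),
          ucomp δ F (δ (deltaStar δ q (List.ofFn fun j : Fin i => g j)) a) (n - i - 1) := by
  classical
  intro n
  induction n with
  | zero => intro q g; rw [Bg_zero]; simp
  | succ n ih =>
    intro q g
    rw [Finset.sum_range_succ', Bg_succ, ih (δ q (g 0)) (fun i => g (i+1))]
    have hA : (∑ a ∈ univ.filter (· < g 0),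
        ucomp δ F (δ (deltaStar δ q (List.ofFn fun j : Fin 0 => g j)) a) (n + 1 - 0 - 1))
        = ∑ a ∈ univ.filter (· < g 0), ucomp δ F (δ q a) n :=
      Finset.sum_congr rfl fun a _ => by simp [deltaStar]
    have hB : (∑ i ∈ range n, ∑ a ∈ univ.filter (· < g (i+1)),
        ucomp δ F (δ (deltaStar δ q (List.ofFn fun j : Fin (i+1) => g j)) a) (n + 1 - (i+1) - 1))
        = ∑ i ∈ range n, ∑ a ∈ univ.filter (· < g (i+1)),
        ucomp δ F (δ (deltaStar δ (δ q (g 0)) (List.ofFn fun j : Fin i => g (j+1))) a) (n - i - 1) :=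
      Finset.sum_congr rfl fun i _ => Finset.sum_congr rfl fun a _ => by
        congr 2
        · rw [ofFn_shift, deltaStar_cons]
        · omega
    rw [hA, hB]
    exact Nat.add_comm _ _

lemma tail_bound (δ : Q → Γ → Q) (F : Set Q) :
    ∀ (n : ℕ) (q : Q) (g : ℕ → Γ),
      (∑ i ∈ range n, ∑ a ∈ univ.filter (· < g i),
          ucomp δ F (δ (deltaStar δ q (List.ofFn fun j : Fin i => g j)) a) (n - i - 1))
        ≤ ucomp δ F q n := by
  classical
  intro n
  induction n with
  | zero => intro q g; simp
  | succ n ih =>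
    intro q g
    rw [Finset.sum_range_succ', ucomp_succ]
    have hA : (∑ a ∈ univ.filter (· < g 0),
        ucomp δ F (δ (deltaStar δ q (List.ofFn fun j : Fin 0 => g j)) a) (n + 1 - 0 - 1))
        = ∑ a ∈ univ.filter (· < g 0), ucomp δ F (δ q a) n :=
      Finset.sum_congr rfl fun a _ => by simp [deltaStar]
    have hB : (∑ i ∈ range n, ∑ a ∈ univ.filter (· < g (i+1)),
        ucomp δ F (δ (deltaStar δ q (List.ofFn fun j : Fin (i+1) => g j)) a) (n + 1 - (i+1) - 1))
        = ∑ i ∈ range n, ∑ a ∈ univ.filter (· < g (i+1)),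
        ucomp δ F (δ (deltaStar δ (δ q (g 0)) (List.ofFn fun j : Fin i => g (j+1))) a) (n - i - 1) :=
      Finset.sum_congr rfl fun i _ => Finset.sum_congr rfl fun a _ => by
        congr 2
        · rw [ofFn_shift, deltaStar_cons]
        · omega
    rw [hA, hB]
    have h1 := ih (δ q (g 0)) (fun i => g (i+1))
    have hnotmem : (g 0) ∉ univ.filter (· < g 0) := by simp
    have h3 : (∑ a ∈ univ.filter (· < g 0), ucomp δ F (δ q a) n) + ucomp δ F (δ q (g 0)) n
        ≤ ∑ a : Γ, ucomp δ F (δ q a) n := by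
      rw [add_comm, ← Finset.sum_insert (f := fun a => ucomp δ F (δ q a) n) hnotmem]
      exact Finset.sum_le_sum_of_subset (Finset.subset_univ _)
    omega
end Aux3
section Aux4
set_option linter.unusedSectionVars false
open Finset
variable {Γ : Type*} [Fintype Γ] [LinearOrder Γ] {Q : Type*}

lemma finite_len_lt (n : ℕ) (P : List Γ → Prop) :
    {x : List Γ | x.length < n ∧ P x}.Finite := by
  have : {x : List Γ | x.length < n ∧ P x}
      ⊆ ⋃ m ∈ Finset.range n, {x : List Γ | x.length = m ∧ P x} := by
    rintro x ⟨h1, h2⟩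
    exact Set.mem_biUnion (by simp [Finset.mem_range, h1] : x.length ∈ Finset.range n) ⟨rfl, h2⟩
  exact Set.Finite.subset (Set.Finite.biUnion (Finset.range n).finite_toSet
    fun m _ => finite_len m P) this

lemma ncard_len_lt (P : List Γ → Prop) : ∀ n : ℕ,
    {x : List Γ | x.length < n ∧ P x}.ncard
      = ∑ m ∈ range n, {x : List Γ | x.length = m ∧ P x}.ncard := by
  intro n
  induction n with
  | zero => simp
  | succ n ih =>
    have hsplit : {x : List Γ | x.length < n + 1 ∧ P x}
        = {x : List Γ | x.length < n ∧ P x} ∪ {x : List Γ | x.length = n ∧ P x} := by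
      ext x
      simp only [Set.mem_setOf_eq, Set.mem_union]
      constructor
      · rintro ⟨h1, h2⟩
        rcases Nat.lt_succ_iff_lt_or_eq.1 h1 with h | h
        · exact Or.inl ⟨h, h2⟩
        · exact Or.inr ⟨h, h2⟩
      · rintro (⟨h1, h2⟩ | ⟨h1, h2⟩)
        · exact ⟨Nat.lt_succ_of_lt h1, h2⟩
        · exact ⟨by omega, h2⟩
    rw [hsplit, Set.ncard_union_eq ?disj (finite_len_lt n P) (finite_len n P),
      Finset.sum_range_succ, ih]
    case disj =>
      rw [Set.disjoint_left]
      rintro x ⟨h1, -⟩ ⟨h2, -⟩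
      omega

lemma valS_prefix (δ : Q → Γ → Q) (F : Set Q) (q0 : Q)
    (w : ℕ → Γ) (n : ℕ) :
    valS {x : List Γ | deltaStar δ q0 x ∈ F} (prefixOf w n)
      = (∑ m ∈ range n, ucomp δ F q0 m) + Bg δ F q0 w n := by
  classical
  have hlen : (prefixOf w n).length = n := by simp [prefixOf]
  have hset : {x ∈ {x : List Γ | deltaStar δ q0 x ∈ F} | genLt x (prefixOf w n)}
      = {x : List Γ | x.length < n ∧ deltaStar δ q0 x ∈ F}
        ∪ {x : List Γ | x.length = n ∧ (deltaStar δ q0 x ∈ F ∧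
            List.Lex (· < ·) x (prefixOf w n))} := by
    ext x
    simp only [Set.mem_setOf_eq, Set.mem_union, Set.mem_sep_iff, genLt, hlen]
    tauto
  rw [valS, hset, Set.ncard_union_eq ?disj (finite_len_lt n _) (finite_len n _)]
  case disj =>
    rw [Set.disjoint_left]
    rintro x ⟨h1, -⟩ ⟨h2, -⟩
    omega
  congr 1
  · exact ncard_len_lt _ n
  · refine (ncard_len n _).trans ?_
    rw [Bg]
    congr 1
    ext f
    simp [prefixOf]

end Aux4
section Aux5
set_option linter.unusedSectionVars false
open Finset
variable {Γ : Type*} [Fintype Γ] [LinearOrder Γ]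

lemma prefixOf_take (w : ℕ → Γ) {k m : ℕ} (h : k ≤ m) :
    prefixOf w k = (prefixOf w m).take k := by
  apply List.ext_getElem
  · simp [prefixOf, h]
  · intro i h1 h2
    simp [prefixOf]

lemma prefixOf_prefix (w : ℕ → Γ) {k m : ℕ} (h : k ≤ m) :
    prefixOf w k <+: prefixOf w m := by
  rw [prefixOf_take w h]
  exact List.take_prefix _ _

lemma koenig (L : Set (List Γ)) (hpc : pref L = L) (x : List Γ)
    (h : ∀ m : ℕ, ∃ z : List Γ, z.length = m ∧ x ++ z ∈ L) : x ∈ centre L := by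
  classical
  obtain ⟨z1, hz1, -⟩ := h 1
  have hne : Nonempty Γ := by
    match z1, hz1 with
    | a :: _, _ => exact ⟨a⟩
  letI : Inhabited Γ := Classical.inhabited_of_nonempty hne
  letI : TopologicalSpace Γ := ⊥
  haveI : DiscreteTopology Γ := ⟨rfl⟩
  letI : TopologicalSpace (List Γ) := ⊥
  haveI : DiscreteTopology (List Γ) := ⟨rfl⟩
  have hcont : ∀ k : ℕ, Continuous (fun ω : ℕ → Γ => prefixOf ω k) := by
    intro k
    have h1 : Continuous (fun ω : ℕ → Γ => (fun i : Fin k => ω i)) :=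
      continuous_pi fun i => continuous_apply (i : ℕ)
    exact Continuous.comp continuous_of_discreteTopology h1
  set C : ℕ → Set (ℕ → Γ) := fun n =>
    {ω | prefixOf ω x.length = x ∧ prefixOf ω (x.length + n) ∈ L} with hC
  have hclosed : ∀ n, IsClosed (C n) := by
    intro n
    have h1 : IsClosed ((fun ω : ℕ → Γ => prefixOf ω x.length) ⁻¹' {x}) :=
      (isClosed_discrete _).preimage (hcont _)
    have h2 : IsClosed ((fun ω : ℕ → Γ => prefixOf ω (x.length + n)) ⁻¹' L) :=
      (isClosed_discrete _).preimage (hcont _)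
    exact h1.inter h2
  have hne' : ∀ n, (C n).Nonempty := by
    intro n
    obtain ⟨z, hzlen, hzL⟩ := h n
    refine ⟨fun i => (x ++ z).getD i default, ?_, ?_⟩
    all_goals {
      have hkey : ∀ k, k ≤ x.length + n →
          prefixOf (fun i => (x ++ z).getD i default) k = (x ++ z).take k := by
        intro k hk
        apply List.ext_getElem
        · simp [prefixOf, List.length_append, hzlen]
          omega
        · intro i h1 h2
          have hi : i < (x ++ z).length := by
            simp [List.length_append, hzlen]
            simp [prefixOf] at h1
            omega
          simp [prefixOf, List.getD, List.getElem?_eq_getElem hi]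
      first
      | · rw [hkey x.length (by omega)]
          exact List.take_left
      | · rw [hkey (x.length + n) le_rfl]
          have : (x ++ z).length = x.length + n := by simp [hzlen]
          rw [← this, List.take_length]
          exact hzL
    }
  have hdec : ∀ n, C (n+1) ⊆ C n := by
    intro n ω hω
    obtain ⟨h1, h2⟩ := hω
    refine ⟨h1, ?_⟩
    rw [← hpc]
    exact ⟨prefixOf ω (x.length + (n+1)), h2, prefixOf_prefix ω (by omega)⟩
  have hcompact : IsCompact (C 0) := (hclosed 0).isCompact
  obtain ⟨ω, hω⟩ := IsCompact.nonempty_iInter_of_sequence_nonempty_isCompact_isClosed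
    C hdec hne' hcompact hclosed
  simp only [Set.mem_iInter] at hω
  refine ⟨ω, ?_, ?_⟩
  · intro ℓ
    exact ⟨prefixOf ω (x.length + ℓ), (hω ℓ).2, prefixOf_prefix ω (by omega)⟩
  · exact ((hω 0).1).symm
end Aux5
section Aux6
set_option linter.unusedSectionVars false
open Finset Filter Topology
variable {Γ : Type*} [Fintype Γ] [LinearOrder Γ] {Q : Type*}

lemma sum_fin_succ {M : Type*} [AddCommMonoid M] (j : ℕ) (G : (Fin (j+1) → Γ) → M) :
    ∑ f : Fin (j+1) → Γ, G f = ∑ a : Γ, ∑ g : Fin j → Γ, G (Fin.cons a g) := by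
  calc ∑ f : Fin (j+1) → Γ, G f
      = ∑ p : Γ × (Fin j → Γ), G (Fin.cons p.1 p.2) :=
        (Fintype.sum_equiv (Fin.consEquiv fun _ => Γ)
          (fun p => G (Fin.cons p.1 p.2)) G (fun p => rfl)).symm
    _ = _ := Fintype.sum_prod_type _

lemma ofFn_cons (a : Γ) {j : ℕ} (g : Fin j → Γ) :
    List.ofFn (Fin.cons a g) = a :: List.ofFn g := by
  rw [List.ofFn_succ]
  simp

lemma rsum_append (r : List Γ → ℝ) (hr : ∀ x, r x = ∑ a : Γ, r (x ++ [a])) :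
    ∀ (j : ℕ) (y : List Γ), (∑ f : Fin j → Γ, r (y ++ List.ofFn f)) = r y := by
  intro j
  induction j with
  | zero =>
    intro y
    rw [Fintype.sum_unique]
    simp
  | succ j ih =>
    intro y
    rw [sum_fin_succ j (fun f => r (y ++ List.ofFn f))]
    have h1 : ∀ a : Γ, (∑ g : Fin j → Γ, r (y ++ List.ofFn (Fin.cons a g))) = r (y ++ [a]) := by
      intro a
      rw [← ih (y ++ [a])]
      refine Finset.sum_congr rfl fun g _ => ?_
      rw [ofFn_cons]
      simp
    rw [Finset.sum_congr rfl fun a _ => h1 a]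
    exact (hr y).symm

open scoped Classical in
lemma lexsum (r : List Γ → ℝ) (hr : ∀ x, r x = ∑ a : Γ, r (x ++ [a])) :
    ∀ (m : ℕ) (y : List Γ) (g : ℕ → Γ),
    (∑ f : Fin m → Γ,
        if List.Lex (· < ·) (List.ofFn f) (List.ofFn fun i : Fin m => g i)
        then r (y ++ List.ofFn f) else 0)
      = ∑ i ∈ range m, ∑ a ∈ univ.filter (· < g i),
          r (y ++ (List.ofFn fun j : Fin i => g j) ++ [a]) := by
  intro m
  induction m with
  | zero =>
    intro y g
    rw [Fintype.sum_unique]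
    simp only [List.ofFn_zero, range_zero, Finset.sum_empty]
    rw [if_neg]
    exact fun h => not_lex_nil' h
  | succ m ih =>
    intro y g
    rw [sum_fin_succ m (fun f => if List.Lex (· < ·) (List.ofFn f)
      (List.ofFn fun i : Fin (m+1) => g i) then r (y ++ List.ofFn f) else 0)]
    have hkey : ∀ a : Γ,
        (∑ g' : Fin m → Γ, if List.Lex (· < ·) (List.ofFn (Fin.cons a g'))
          (List.ofFn fun i : Fin (m+1) => g i) then r (y ++ List.ofFn (Fin.cons a g')) else 0)
        = if a < g 0 then r (y ++ [a])
          else if a = g 0 then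
            (∑ f : Fin m → Γ, if List.Lex (· < ·) (List.ofFn f)
              (List.ofFn fun i : Fin m => g (i+1)) then r ((y ++ [g 0]) ++ List.ofFn f) else 0)
          else 0 := by
      intro a
      have hcond : ∀ g' : Fin m → Γ,
          List.Lex (· < ·) (List.ofFn (Fin.cons a g')) (List.ofFn fun i : Fin (m+1) => g i)
          ↔ (a < g 0 ∨ (a = g 0 ∧ List.Lex (· < ·) (List.ofFn g')
              (List.ofFn fun i : Fin m => g (i+1)))) := by
        intro g'
        rw [ofFn_cons, ofFn_shift, lex_cons_iff']
      rcases lt_trichotomy a (g 0) with h | h | h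
      · rw [if_pos h]
        have : ∀ g' : Fin m → Γ,
            (if List.Lex (· < ·) (List.ofFn (Fin.cons a g'))
              (List.ofFn fun i : Fin (m+1) => g i) then r (y ++ List.ofFn (Fin.cons a g')) else 0)
            = r ((y ++ [a]) ++ List.ofFn g') := by
          intro g'
          rw [if_pos ((hcond g').2 (Or.inl h)), ofFn_cons]
          simp
        rw [Finset.sum_congr rfl fun g' _ => this g']
        exact rsum_append r hr m (y ++ [a])
      · subst h
        rw [if_neg (lt_irrefl (g 0)), if_pos rfl]
        refine Finset.sum_congr rfl fun g' _ => ?_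
        by_cases hlex : List.Lex (· < ·) (List.ofFn g') (List.ofFn fun i : Fin m => g (i+1))
        · rw [if_pos ((hcond g').2 (Or.inr ⟨rfl, hlex⟩)), if_pos hlex, ofFn_cons]
          simp
        · rw [if_neg, if_neg hlex]
          intro hc
          rcases (hcond g').1 hc with h1 | ⟨-, h2⟩
          · exact lt_irrefl _ h1
          · exact hlex h2
      · rw [if_neg (asymm h), if_neg (ne_of_gt h)]
        refine Finset.sum_eq_zero fun g' _ => ?_
        rw [if_neg]
        intro hc
        rcases (hcond g').1 hc with h1 | ⟨h1, -⟩
        · exact asymm h h1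
        · exact (ne_of_gt h) h1
    rw [Finset.sum_congr rfl fun a _ => hkey a, sum_trichotomy (g 0) _ _,
      ih (y ++ [g 0]) (fun i => g (i+1)), Finset.sum_range_succ', add_comm]
    congr 1
    · refine Finset.sum_congr rfl fun i _ => ?_
      refine Finset.sum_congr rfl fun a _ => ?_
      congr 1
      rw [ofFn_shift]
      simp
    · refine Finset.sum_congr rfl fun a _ => ?_
      congr 1
      simp
end Aux6
section Aux7
set_option linter.unusedSectionVars false
open Finset Filter Topology
variable {Γ : Type*} [Fintype Γ] [LinearOrder Γ] {Q : Type*}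

open scoped Classical in
lemma centre_lexsum (L : Set (List Γ)) (r : List Γ → ℝ)
    (hzero : ∀ x : List Γ, x ∉ centre L → r x = 0)
    (hr : ∀ x, r x = ∑ a : Γ, r (x ++ [a])) :
    ∀ (n : ℕ) (g : ℕ → Γ) (y : List Γ), y = (List.ofFn fun i : Fin n => g i) →
    (∑ f : Fin n → Γ,
        if List.ofFn f ∈ centre L ∧ List.Lex (· < ·) (List.ofFn f) y
        then r (List.ofFn f) else 0)
      = ∑ i ∈ range n, ∑ a ∈ univ.filter (· < g i),
          r ((List.ofFn fun j : Fin i => g j) ++ [a]) := by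
  intro n g y hy
  subst hy
  have h1 : ∀ f : Fin n → Γ,
      (if List.ofFn f ∈ centre L ∧ List.Lex (· < ·) (List.ofFn f)
          (List.ofFn fun i : Fin n => g i) then r (List.ofFn f) else 0)
      = (if List.Lex (· < ·) (List.ofFn f) (List.ofFn fun i : Fin n => g i)
          then r (([] : List Γ) ++ List.ofFn f) else 0) := by
    intro f
    by_cases hc : List.ofFn f ∈ centre L
    · by_cases hlex : List.Lex (· < ·) (List.ofFn f) (List.ofFn fun i : Fin n => g i)
      · rw [if_pos ⟨hc, hlex⟩, if_pos hlex, List.nil_append]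
      · rw [if_neg (fun h => hlex h.2), if_neg hlex]
    · by_cases hlex : List.Lex (· < ·) (List.ofFn f) (List.ofFn fun i : Fin n => g i)
      · rw [if_neg (fun h => hc h.1), if_pos hlex, List.nil_append, hzero _ hc]
      · rw [if_neg (fun h => hc h.1), if_neg hlex]
  rw [Finset.sum_congr rfl fun f _ => h1 f, lexsum r hr n ([] : List Γ) g]
  refine Finset.sum_congr rfl fun i _ => Finset.sum_congr rfl fun a _ => ?_
  rw [List.nil_append]

lemma alphaFin_pre (L : Set (List Γ)) (r : List Γ → ℝ)
    (hzero : ∀ x : List Γ, x ∉ centre L → r x = 0)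
    (hr : ∀ x, r x = ∑ a : Γ, r (x ++ [a])) (w : ℕ → Γ) (ℓ : ℕ) :
    alphaFin L r (prefixOf w ℓ)
      = (1 - r []) + ∑ i ∈ range ℓ, ∑ a ∈ univ.filter (· < w i),
          r (prefixOf w i ++ [a]) := by
  classical
  have hlen : (prefixOf w ℓ).length = ℓ := by simp [prefixOf]
  have heq : prefixOf w ℓ = List.ofFn fun i : Fin (prefixOf w ℓ).length => w i := by
    apply List.ext_getElem
    · simp [prefixOf]
    · intro i h1 h2
      simp [prefixOf]
  rw [alphaFin, centre_lexsum L r hzero hr (prefixOf w ℓ).length w (prefixOf w ℓ) heq, hlen]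
  rfl

lemma r_nonneg (δ : Q → Γ → Q) (F : Set Q) (q0 : Q) (r : List Γ → ℝ)
    (hH2 : ∀ x : List Γ,
      Tendsto (fun n : ℕ =>
          (ucomp δ F (deltaStar δ q0 x) (n - x.length) : ℝ) / (vcomp δ F q0 n : ℝ))
        atTop (𝓝 (r x))) :
    ∀ x, 0 ≤ r x := by
  intro x
  refine ge_of_tendsto' (hH2 x) fun n => ?_
  positivity

lemma r_add (δ : Q → Γ → Q) (F : Set Q) (q0 : Q) (r : List Γ → ℝ)
    (hH2 : ∀ x : List Γ,
      Tendsto (fun n : ℕ =>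
          (ucomp δ F (deltaStar δ q0 x) (n - x.length) : ℝ) / (vcomp δ F q0 n : ℝ))
        atTop (𝓝 (r x))) :
    ∀ x, r x = ∑ a : Γ, r (x ++ [a]) := by
  intro x
  have h2 : Tendsto (fun n : ℕ => ∑ a : Γ,
      (ucomp δ F (deltaStar δ q0 (x ++ [a])) (n - (x ++ [a]).length) : ℝ)
        / (vcomp δ F q0 n : ℝ)) atTop (𝓝 (∑ a : Γ, r (x ++ [a]))) :=
    tendsto_finset_sum _ fun a _ => hH2 (x ++ [a])
  have heq : (fun n : ℕ => (ucomp δ F (deltaStar δ q0 x) (n - x.length) : ℝ)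
        / (vcomp δ F q0 n : ℝ))
      =ᶠ[atTop] (fun n : ℕ => ∑ a : Γ,
      (ucomp δ F (deltaStar δ q0 (x ++ [a])) (n - (x ++ [a]).length) : ℝ)
        / (vcomp δ F q0 n : ℝ)) := by
    rw [Filter.eventuallyEq_iff_exists_mem]
    refine ⟨{n | x.length + 1 ≤ n}, mem_atTop _, fun n hn => ?_⟩
    have hn' : x.length + 1 ≤ n := hn
    dsimp only
    have hstep : ucomp δ F (deltaStar δ q0 x) (n - x.length)
        = ∑ a : Γ, ucomp δ F (deltaStar δ q0 (x ++ [a])) (n - (x ++ [a]).length) := by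
      have h3 : n - x.length = (n - x.length - 1) + 1 := by omega
      rw [h3, ucomp_succ]
      refine Finset.sum_congr rfl fun a _ => ?_
      rw [deltaStar_append]
      congr 1
      simp only [List.length_append, List.length_singleton]
      omega
    rw [hstep]
    push_cast
    rw [Finset.sum_div]
  exact tendsto_nhds_unique ((hH2 x).congr' heq) h2

lemma r_zero (δ : Q → Γ → Q) (F : Set Q) (q0 : Q) (r : List Γ → ℝ)
    (L : Set (List Γ)) (hL : L = {x : List Γ | deltaStar δ q0 x ∈ F}) (hpc : pref L = L)
    (hH2 : ∀ x : List Γ,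
      Tendsto (fun n : ℕ =>
          (ucomp δ F (deltaStar δ q0 x) (n - x.length) : ℝ) / (vcomp δ F q0 n : ℝ))
        atTop (𝓝 (r x))) :
    ∀ x : List Γ, x ∉ centre L → r x = 0 := by
  intro x hx
  obtain ⟨m, hm⟩ : ∃ m : ℕ, ∀ z : List Γ, z.length = m → x ++ z ∉ L := by
    by_contra hcon
    push_neg at hcon
    exact hx (koenig L hpc x fun m => by
      obtain ⟨z, hz1, hz2⟩ := hcon m
      exact ⟨z, hz1, hz2⟩)
  have hzero : ∀ n : ℕ, x.length + m ≤ n →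
      ucomp δ F (deltaStar δ q0 x) (n - x.length) = 0 := by
    intro n hn
    rw [ucomp]
    convert Set.ncard_empty (List Γ)
    rw [Set.eq_empty_iff_forall_notMem]
    rintro z ⟨hzlen, hzF⟩
    have hmem : x ++ z ∈ L := by
      rw [hL]
      show deltaStar δ q0 (x ++ z) ∈ F
      rw [deltaStar_append]
      exact hzF
    have htake : x ++ z.take m ∈ L := by
      rw [← hpc]
      refine ⟨x ++ z, hmem, ⟨z.drop m, ?_⟩⟩
      rw [List.append_assoc, List.take_append_drop]
    exact hm (z.take m) (by rw [List.length_take]; omega) htake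
  have h0 : Tendsto (fun n : ℕ => (ucomp δ F (deltaStar δ q0 x) (n - x.length) : ℝ)
      / (vcomp δ F q0 n : ℝ)) atTop (𝓝 0) := by
    refine Tendsto.congr' ?_ tendsto_const_nhds
    rw [Filter.eventuallyEq_iff_exists_mem]
    refine ⟨{n | x.length + m ≤ n}, mem_atTop _, fun n hn => ?_⟩
    simp [hzero n hn]
  exact tendsto_nhds_unique (hH2 x) h0
end Aux7
section Aux8
set_option linter.unusedSectionVars false
open Finset Filter Topology
variable {Γ : Type*} [Fintype Γ] [LinearOrder Γ] {Q : Type*}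

lemma ofFn_add_split (w : ℕ → Γ) (k j : ℕ) :
    (List.ofFn fun t : Fin (k+j) => w t)
      = (List.ofFn fun t : Fin k => w t) ++ (List.ofFn fun t : Fin j => w (k+t)) := by
  apply List.ext_getElem
  · simp
  · intro i h1 h2
    simp only [List.getElem_ofFn, List.getElem_append, List.length_ofFn]
    split
    · rfl
    · congr 1
      simp only [List.length_ofFn] at *
      omega

lemma deltaStar_prefix_add (δ : Q → Γ → Q) (q0 : Q) (w : ℕ → Γ) (k j : ℕ) :
    deltaStar δ q0 (List.ofFn fun t : Fin (k+j) => w t)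
      = deltaStar δ (deltaStar δ q0 (List.ofFn fun t : Fin k => w t))
          (List.ofFn fun t : Fin j => w (k+t)) := by
  rw [ofFn_add_split w k j, deltaStar_append]
end Aux8
theorem stmt_13 {Γ : Type*} [Fintype Γ] [LinearOrder Γ]
    (L : Set (List Γ)) (hLinf : L.Infinite) (hpc : pref L = L)
    {Q : Type*} (q0 : Q) (δ : Q → Γ → Q) (F : Set Q)
    (hacc : ∀ q : Q, ∃ x : List Γ, deltaStar δ q0 x = q)
    (hL : L = {x | deltaStar δ q0 x ∈ F})
    (r : List Γ → ℝ)
    (hH2 : ∀ x : List Γ,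
      Tendsto (fun n : ℕ =>
          (ucomp δ F (deltaStar δ q0 x) (n - x.length) : ℝ) / (vcomp δ F q0 n : ℝ))
        atTop (𝓝 (r x)))
    (hH3 : ∀ w ∈ adh L, Tendsto (fun ℓ : ℕ => r (prefixOf w ℓ)) atTop (𝓝 0))
    (w : ℕ → Γ) (hw : w ∈ adh L) (aw : ℝ)
    (haw : Tendsto (fun ℓ : ℕ => alphaFin L r (prefixOf w ℓ)) atTop (𝓝 aw)) :
    Tendsto (fun n : ℕ => (valS L (prefixOf w n) : ℝ) / (vcomp δ F q0 n : ℝ))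
      atTop (𝓝 aw) := by
  classical
  open Finset in
  subst hL
  set L : Set (List Γ) := {x : List Γ | deltaStar δ q0 x ∈ F} with hLdef
  -- basic positivity of v
  have hx_ex : ∀ n : ℕ, ∃ x : List Γ, deltaStar δ q0 x ∈ F ∧ x.length = n := by
    intro n
    have hns : ¬ (L ⊆ {x : List Γ | x.length < n ∧ True}) := fun hsub =>
      hLinf ((finite_len_lt n (fun _ => True)).subset hsub)
    rw [Set.not_subset] at hns
    obtain ⟨x, hxL, hxlen⟩ := hns
    have hxlen' : n ≤ x.length := by
      by_contra hcon
      exact hxlen ⟨by omega, trivial⟩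
    have htake : x.take n ∈ L := by
      rw [← hpc]
      exact ⟨x, hxL, List.take_prefix n x⟩
    exact ⟨x.take n, htake, by rw [List.length_take]; omega⟩
  have hu1 : ∀ n : ℕ, 1 ≤ ucomp δ F q0 n := by
    intro n
    obtain ⟨x, hxF, hxlen⟩ := hx_ex n
    rw [ucomp]
    exact (Set.ncard_pos (finite_len n _)).2 ⟨x, hxlen, hxF⟩
  have hv1 : ∀ n : ℕ, 1 ≤ vcomp δ F q0 n := fun n =>
    le_trans (hu1 n) (Finset.single_le_sum (f := fun m => ucomp δ F q0 m)
      (fun i _ => Nat.zero_le _) (Finset.self_mem_range_succ n))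
  have hvpos : ∀ n : ℕ, (0:ℝ) < (vcomp δ F q0 n : ℝ) := by
    intro n
    have := hv1 n
    exact_mod_cast Nat.lt_of_lt_of_le Nat.zero_lt_one this
  have hvne : ∀ n : ℕ, (vcomp δ F q0 n : ℝ) ≠ 0 := fun n => ne_of_gt (hvpos n)
  -- r facts
  have hradd := r_add δ F q0 r hH2
  have hrzero := r_zero δ F q0 r L hLdef hpc hH2
  -- limits
  have hpre : ∀ i : ℕ, prefixOf w i = List.ofFn fun j : Fin i => w j := fun _ => rfl
  have h0 : Tendsto (fun n : ℕ => (ucomp δ F q0 n : ℝ) / (vcomp δ F q0 n : ℝ))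
      atTop (𝓝 (r [])) := by
    have h := hH2 []
    simpa [deltaStar] using h
  have hterma : ∀ (i : ℕ) (a : Γ), Tendsto (fun n : ℕ =>
      (ucomp δ F (δ (deltaStar δ q0 (List.ofFn fun j : Fin i => w j)) a) (n - i - 1) : ℝ)
        / (vcomp δ F q0 n : ℝ)) atTop (𝓝 (r (prefixOf w i ++ [a]))) := by
    intro i a
    have h := hH2 (prefixOf w i ++ [a])
    have hlen : (prefixOf w i ++ [a]).length = i + 1 := by simp [prefixOf]
    have hds : deltaStar δ q0 (prefixOf w i ++ [a])
        = δ (deltaStar δ q0 (List.ofFn fun j : Fin i => w j)) a := by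
      rw [deltaStar_append]
      rfl
    simp only [hlen, hds, ← Nat.sub_sub] at h
    exact h
  have htailk : ∀ k : ℕ, Tendsto (fun n : ℕ =>
      (ucomp δ F (deltaStar δ q0 (List.ofFn fun j : Fin k => w j)) (n - k) : ℝ)
        / (vcomp δ F q0 n : ℝ)) atTop (𝓝 (r (prefixOf w k))) := by
    intro k
    have h := hH2 (prefixOf w k)
    have hlen : (prefixOf w k).length = k := by simp [prefixOf]
    simp only [hlen] at h
    exact h
  -- the counting formula, cast to ℝ
  have hval : ∀ n : ℕ, (valS L (prefixOf w n) : ℝ)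
      = ((vcomp δ F q0 n : ℝ) - (ucomp δ F q0 n : ℝ))
        + ∑ i ∈ Finset.range n, ∑ a ∈ Finset.univ.filter (· < w i),
            (ucomp δ F (δ (deltaStar δ q0 (List.ofFn fun j : Fin i => w j)) a) (n - i - 1) : ℝ) := by
    intro n
    have h1 := valS_prefix δ F q0 w n
    have h2 : ((vcomp δ F q0 n : ℕ) : ℝ) = (∑ m ∈ Finset.range n, (ucomp δ F q0 m : ℝ))
        + (ucomp δ F q0 n : ℝ) := by
      rw [vcomp]
      push_cast
      rw [Finset.sum_range_succ]
    rw [h1, Bg_formula δ F n q0 w]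
    push_cast
    rw [h2]
    ring
  -- tail bound over Ico, in ℕ
  have htailN : ∀ k n : ℕ, k ≤ n →
      (∑ i ∈ Finset.Ico k n, ∑ a ∈ Finset.univ.filter (· < w i),
          ucomp δ F (δ (deltaStar δ q0 (List.ofFn fun j : Fin i => w j)) a) (n - i - 1))
        ≤ ucomp δ F (deltaStar δ q0 (List.ofFn fun j : Fin k => w j)) (n - k) := by
    intro k n hkn
    rw [Finset.sum_Ico_eq_sum_range]
    refine le_trans (le_of_eq ?_)
      (tail_bound δ F (n - k) (deltaStar δ q0 (List.ofFn fun j : Fin k => w j))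
        (fun j => w (k + j)))
    refine Finset.sum_congr rfl fun j hj => Finset.sum_congr rfl fun a ha => ?_
    rw [deltaStar_prefix_add δ q0 w k j]
    congr 1
    omega
  -- the ε-argument
  rw [Metric.tendsto_atTop]
  intro ε hε
  obtain ⟨k1, hk1⟩ := Metric.tendsto_atTop.1 (hH3 w hw) (ε/4) (by positivity)
  obtain ⟨k2, hk2⟩ := Metric.tendsto_atTop.1 haw (ε/4) (by positivity)
  set k := max k1 k2 with hk
  have hrk : r (prefixOf w k) < ε/4 := by
    have h := hk1 k (le_max_left _ _)
    rw [Real.dist_eq, sub_zero] at h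
    exact lt_of_le_of_lt (le_abs_self _) h
  have hSk : dist (alphaFin L r (prefixOf w k)) aw < ε/4 := hk2 k (le_max_right _ _)
  have hpart : Tendsto (fun n : ℕ =>
      (1 - (ucomp δ F q0 n : ℝ)/(vcomp δ F q0 n : ℝ))
      + ∑ i ∈ Finset.range k, ∑ a ∈ Finset.univ.filter (· < w i),
          (ucomp δ F (δ (deltaStar δ q0 (List.ofFn fun j : Fin i => w j)) a) (n - i - 1) : ℝ)
            /(vcomp δ F q0 n : ℝ)) atTop (𝓝 (alphaFin L r (prefixOf w k))) := by
    rw [alphaFin_pre L r hrzero hradd w k]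
    refine Tendsto.add (tendsto_const_nhds.sub h0) ?_
    refine tendsto_finset_sum _ fun i _ => ?_
    refine tendsto_finset_sum _ fun a _ => ?_
    exact hterma i a
  obtain ⟨N1, hN1⟩ := Metric.tendsto_atTop.1 hpart (ε/4) (by positivity)
  obtain ⟨N2, hN2⟩ := Metric.tendsto_atTop.1 (htailk k) (ε/4) (by positivity)
  refine ⟨max k (max N1 N2), fun n hn => ?_⟩
  have hkn : k ≤ n := le_trans (le_max_left _ _) hn
  have hn1 : N1 ≤ n := le_trans (le_trans (le_max_left _ _) (le_max_right _ _)) hn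
  have hn2 : N2 ≤ n := le_trans (le_trans (le_max_right _ _) (le_max_right _ _)) hn
  have hAn := hN1 n hn1
  have hUb : (ucomp δ F (deltaStar δ q0 (List.ofFn fun j : Fin k => w j)) (n - k) : ℝ)
      /(vcomp δ F q0 n : ℝ) < ε/2 := by
    have h := hN2 n hn2
    rw [Real.dist_eq] at h
    have h2 := le_abs_self ((ucomp δ F (deltaStar δ q0 (List.ofFn fun j : Fin k => w j)) (n - k) : ℝ)
      /(vcomp δ F q0 n : ℝ) - r (prefixOf w k))
    linarith
  -- decomposition of f n
  set AA : ℝ := (1 - (ucomp δ F q0 n : ℝ)/(vcomp δ F q0 n : ℝ))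
      + ∑ i ∈ Finset.range k, ∑ a ∈ Finset.univ.filter (· < w i),
          (ucomp δ F (δ (deltaStar δ q0 (List.ofFn fun j : Fin i => w j)) a) (n - i - 1) : ℝ)
            /(vcomp δ F q0 n : ℝ) with hAA
  set D : ℝ := (∑ i ∈ Finset.Ico k n, ∑ a ∈ Finset.univ.filter (· < w i),
          (ucomp δ F (δ (deltaStar δ q0 (List.ofFn fun j : Fin i => w j)) a) (n - i - 1) : ℝ))
            /(vcomp δ F q0 n : ℝ) with hD
  have hfA : (valS L (prefixOf w n) : ℝ)/(vcomp δ F q0 n : ℝ) = AA + D := by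
    have hsplit : (∑ i ∈ Finset.range n, ∑ a ∈ Finset.univ.filter (· < w i),
        (ucomp δ F (δ (deltaStar δ q0 (List.ofFn fun j : Fin i => w j)) a) (n - i - 1) : ℝ))
        = (∑ i ∈ Finset.range k, ∑ a ∈ Finset.univ.filter (· < w i),
            (ucomp δ F (δ (deltaStar δ q0 (List.ofFn fun j : Fin i => w j)) a) (n - i - 1) : ℝ))
          + ∑ i ∈ Finset.Ico k n, ∑ a ∈ Finset.univ.filter (· < w i),
            (ucomp δ F (δ (deltaStar δ q0 (List.ofFn fun j : Fin i => w j)) a) (n - i - 1) : ℝ) :=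
      (Finset.sum_range_add_sum_Ico _ hkn).symm
    rw [hval n, hsplit, hAA, hD]
    rw [add_div, add_div, sub_div, div_self (hvne n)]
    simp only [Finset.sum_div]
    ring
  have hDnn : 0 ≤ D := by
    rw [hD]
    positivity
  have hDle : D ≤ (ucomp δ F (deltaStar δ q0 (List.ofFn fun j : Fin k => w j)) (n - k) : ℝ)
      /(vcomp δ F q0 n : ℝ) := by
    rw [hD]
    gcongr
    · exact_mod_cast htailN k n hkn
  have hdist1 : dist ((valS L (prefixOf w n) : ℝ)/(vcomp δ F q0 n : ℝ)) AA < ε/2 := by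
    rw [hfA, Real.dist_eq]
    rw [add_sub_cancel_left, abs_of_nonneg hDnn]
    exact lt_of_le_of_lt hDle hUb
  have htri := dist_triangle4 ((valS L (prefixOf w n) : ℝ)/(vcomp δ F q0 n : ℝ)) AA
    (alphaFin L r (prefixOf w k)) aw
  have : dist ((valS L (prefixOf w n) : ℝ)/(vcomp δ F q0 n : ℝ)) aw < ε := by
    have hAn' : dist AA (alphaFin L r (prefixOf w k)) < ε/4 := hAn
    linarith
  exact this
end

section
/- Under the Setup with Hypothesis (H2), if w, z ∈ adh(L) and w is lexicographically less than or equal to z (as infinite words), then α_w ≤ α_z, i.e., the S-value function is nondecreasing for the lexicographic ordering on adh(L). -/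
open Filter Topology

/-- Lexicographic order on infinite words induced by the order on the alphabet. -/
def infLexLe {A : Type*} [LinearOrder A] (w z : ℕ → A) : Prop :=
  w = z ∨ ∃ k : ℕ, (∀ i < k, w i = z i) ∧ w k < z k


lemma prefix_lex_aux {Γ : Type*} [LinearOrder Γ] :
    ∀ (k : ℕ) (w z : ℕ → Γ), (∀ i < k, w i = z i) → w k < z k → ∀ ℓ, k < ℓ →
    List.Lex (· < ·) (prefixOf w ℓ) (prefixOf z ℓ) := by
  intro k
  induction k with
  | zero =>
    intro w z _ hlt ℓ hℓ
    obtain ⟨m, rfl⟩ : ∃ m, ℓ = m + 1 := ⟨ℓ - 1, by omega⟩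
    rw [prefixOf, prefixOf, List.ofFn_succ, List.ofFn_succ]
    exact List.Lex.rel hlt
  | succ k ih =>
    intro w z hag hlt ℓ hℓ
    obtain ⟨m, rfl⟩ : ∃ m, ℓ = m + 1 := ⟨ℓ - 1, by omega⟩
    rw [prefixOf, prefixOf, List.ofFn_succ, List.ofFn_succ]
    have h0 : w 0 = z 0 := hag 0 (Nat.succ_pos k)
    rw [show ((0 : Fin (m+1)) : ℕ) = 0 from rfl, h0]
    apply List.Lex.cons
    have := ih (fun j => w (j+1)) (fun j => z (j+1))
      (fun i hi => hag (i+1) (Nat.succ_lt_succ hi)) hlt m (Nat.lt_of_succ_lt_succ hℓ)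
    simpa [prefixOf, Fin.val_succ] using this

open scoped Classical in
lemma alphaFin_le_aux {Γ : Type*} [Fintype Γ] [LinearOrder Γ] (L : Set (List Γ))
    (r : List Γ → ℝ) (hr : ∀ x, 0 ≤ r x) (y1 y2 : List Γ) (hlen : y1.length = y2.length)
    (h : List.Lex (· < ·) y1 y2) : alphaFin L r y1 ≤ alphaFin L r y2 := by
  rw [alphaFin, alphaFin, show y2.length = y1.length from hlen.symm]
  apply add_le_add_right
  apply Finset.sum_le_sum
  intro f _
  split_ifs with h1 h2 h2
  · exact le_rfl
  · exact absurd ⟨h1.1, List.lex_trans (fun h₁ h₂ => lt_trans h₁ h₂) h1.2 h⟩ h2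
  · exact hr _
  · exact le_rfl

theorem stmt_14 {Γ : Type*} [Fintype Γ] [LinearOrder Γ]
    (L : Set (List Γ)) (hLinf : L.Infinite) (hpc : pref L = L)
    {Q : Type*} (q0 : Q) (δ : Q → Γ → Q) (F : Set Q)
    (hacc : ∀ q : Q, ∃ x : List Γ, deltaStar δ q0 x = q)
    (hL : L = {x | deltaStar δ q0 x ∈ F})
    (r : List Γ → ℝ)
    (hH2 : ∀ x : List Γ,
      Tendsto (fun n : ℕ =>
          (ucomp δ F (deltaStar δ q0 x) (n - x.length) : ℝ) / (vcomp δ F q0 n : ℝ))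
        atTop (𝓝 (r x)))
    (w z : ℕ → Γ) (hw : w ∈ adh L) (hz : z ∈ adh L)
    (hwz : infLexLe w z) (aw az : ℝ)
    (haw : Tendsto (fun ℓ : ℕ => alphaFin L r (prefixOf w ℓ)) atTop (𝓝 aw))
    (haz : Tendsto (fun ℓ : ℕ => alphaFin L r (prefixOf z ℓ)) atTop (𝓝 az)) :
    aw ≤ az := by
  have hr : ∀ x, 0 ≤ r x := fun x => ge_of_tendsto' (hH2 x) (fun n => by positivity)
  rcases hwz with rfl | ⟨k, hag, hlt⟩
  · exact le_of_eq (tendsto_nhds_unique haw haz)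
  · refine le_of_tendsto_of_tendsto' haw haz (fun ℓ => ?_)
    rcases le_or_gt ℓ k with h | h
    · have he : prefixOf w ℓ = prefixOf z ℓ := by
        unfold prefixOf; congr 1; funext i; exact hag i (lt_of_lt_of_le i.isLt h)
      rw [he]
    · exact alphaFin_le_aux L r hr _ _ (by simp [prefixOf])
        (prefix_lex_aux k w z hag hlt ℓ h)
end

section
/- Let D be the Dyck language over the two-letter alphabet {a, b} and, for m, n ∈ ℕ, let u_{d_m}(n) := card{ w ∈ {a,b}ⁿ : aᵐ w ∈ D }. Then for every m ≥ 0, the series Σ_{i=m}^{∞} u_{d_{2m}}(2i) · 4^{−i} converges with sum 2, and the series Σ_{i=m}^{∞} u_{d_{2m+1}}(2i+1) · 4^{−i} converges with sum 4. -/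
/-- The two-letter alphabet `{a, b}` for the Dyck language
(`a` is the opening parenthesis, `b` the closing one). -/
inductive Letter : Type
  | a : Letter
  | b : Letter
  deriving DecidableEq

/-- The Dyck language: words with as many `a`'s as `b`'s, every prefix of which
has at least as many `a`'s as `b`'s. -/
def Dyck : Set (List Letter) :=
  {w | w.count Letter.a = w.count Letter.b ∧
    ∀ u : List Letter, u <+: w → u.count Letter.b ≤ u.count Letter.a}

/-- `uDyck m n` : the number of words `w` of length `n` such that `aᵐ w` is a Dyck word,
i.e. the number of words of length `n` accepted from the state reached by `aᵐ` in the
minimal automaton of the Dyck language. -/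
noncomputable def uDyck (m n : ℕ) : ℕ :=
  {w : List Letter | w.length = n ∧ (List.replicate m Letter.a ++ w) ∈ Dyck}.ncard


instance : Fintype Letter :=
  ⟨{Letter.a, Letter.b}, by intro x; cases x <;> simp⟩

namespace DyckAux

def S (m n : ℕ) : Set (List Letter) :=
  {w : List Letter | w.length = n ∧ (List.replicate m Letter.a ++ w) ∈ Dyck}

lemma uDyck_eq (m n : ℕ) : uDyck m n = (S m n).ncard := rfl

lemma S_finite (m n : ℕ) : (S m n).Finite :=
  (List.finite_length_eq Letter n).subset fun _ hw => hw.1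

lemma count_a_add_count_b (w : List Letter) :
    w.count Letter.a + w.count Letter.b = w.length := by
  induction w with
  | nil => simp
  | cons x t ih => cases x <;> simp [List.count_cons] <;> omega

lemma mem_dyck_iff (k : ℕ) (w : List Letter) :
    (List.replicate k Letter.a ++ w) ∈ Dyck ↔
      (k + w.count Letter.a = w.count Letter.b ∧
       ∀ u : List Letter, u <+: w → u.count Letter.b ≤ k + u.count Letter.a) := by
  constructor
  · rintro ⟨h1, h2⟩
    constructor
    · simp [List.count_append, List.count_replicate] at h1
      omega
    · intro u hu
      have := h2 (List.replicate k Letter.a ++ u) ((List.prefix_append_right_inj _).mpr hu)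
      simp [List.count_append, List.count_replicate] at this
      omega
  · rintro ⟨h1, h2⟩
    constructor
    · simp [List.count_append, List.count_replicate]
      omega
    · intro u hu
      rcases List.prefix_or_prefix_of_prefix hu (List.prefix_append _ _) with h | h
      · have hz : u.count Letter.b = 0 := by
          rw [List.count_eq_zero]
          intro hmem
          exact absurd (List.eq_of_mem_replicate (h.subset hmem)) (by simp)
        simp [hz]
      · obtain ⟨v, rfl⟩ := h
        have hv : v <+: w := (List.prefix_append_right_inj _).mp hu
        have := h2 v hv
        simp [List.count_append, List.count_replicate]
        omega

lemma uDyck_zero_zero : uDyck 0 0 = 1 := by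
  rw [uDyck_eq, show S 0 0 = {([] : List Letter)} from ?_, Set.ncard_singleton]
  ext w
  simp only [S, Set.mem_setOf_eq, Set.mem_singleton_iff, List.length_eq_zero_iff]
  constructor
  · rintro ⟨rfl, -⟩; rfl
  · rintro rfl
    refine ⟨rfl, ?_⟩
    rw [mem_dyck_iff]
    constructor
    · simp
    · intro u hu
      rw [List.prefix_nil] at hu
      simp [hu]

lemma uDyck_eq_zero_of_lt {m n : ℕ} (h : n < m) : uDyck m n = 0 := by
  rw [uDyck_eq, show S m n = ∅ from ?_, Set.ncard_empty]
  ext w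
  simp only [S, Set.mem_setOf_eq, Set.mem_empty_iff_false, iff_false, not_and]
  intro hl hd
  rw [mem_dyck_iff] at hd
  have := count_a_add_count_b w
  omega

lemma rep_cons_a (k : ℕ) (w : List Letter) :
    List.replicate k Letter.a ++ (Letter.a :: w) = List.replicate (k+1) Letter.a ++ w := by
  rw [List.replicate_succ' , List.append_assoc]
  rfl

lemma dyck_cons_b (k : ℕ) (w : List Letter) :
    (List.replicate (k+1) Letter.a ++ (Letter.b :: w)) ∈ Dyck ↔
      (List.replicate k Letter.a ++ w) ∈ Dyck := by
  rw [mem_dyck_iff, mem_dyck_iff]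
  constructor
  · rintro ⟨h1, h2⟩
    constructor
    · simp [List.count_cons] at h1; omega
    · intro u hu
      have := h2 (Letter.b :: u) (by rw [List.cons_prefix_cons]; exact ⟨rfl, hu⟩)
      simp [List.count_cons] at this; omega
  · rintro ⟨h1, h2⟩
    constructor
    · simp [List.count_cons] at h1 ⊢; omega
    · intro u hu
      rcases u with _ | ⟨x, v⟩
      · simp
      · rw [List.cons_prefix_cons] at hu
        obtain ⟨rfl, hv⟩ := hu
        have := h2 v hv
        simp [List.count_cons]; omega

lemma cons_inj (x : Letter) : Function.Injective (fun w : List Letter => x :: w) :=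
  fun _ _ h => by injection h

lemma uDyck_succ_succ (m n : ℕ) :
    uDyck (m+1) (n+1) = uDyck (m+2) n + uDyck m n := by
  have hset : S (m+1) (n+1) =
      (fun w => Letter.a :: w) '' S (m+2) n ∪ (fun w => Letter.b :: w) '' S m n := by
    ext w
    constructor
    · rintro ⟨hl, hd⟩
      rcases w with _ | ⟨x, w'⟩
      · simp at hl
      · cases x
        · left
          refine ⟨w', ⟨by simpa using hl, ?_⟩, rfl⟩
          rwa [← rep_cons_a]
        · right
          refine ⟨w', ⟨by simpa using hl, ?_⟩, rfl⟩
          rwa [← dyck_cons_b]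
    · rintro (⟨w', ⟨hl, hd⟩, rfl⟩ | ⟨w', ⟨hl, hd⟩, rfl⟩)
      · exact ⟨by simpa using hl, by rwa [rep_cons_a]⟩
      · exact ⟨by simpa using hl, by rwa [dyck_cons_b]⟩
  rw [uDyck_eq, uDyck_eq, uDyck_eq, hset,
    Set.ncard_union_eq ?_ ((S_finite _ _).image _) ((S_finite _ _).image _),
    Set.ncard_image_of_injective _ (cons_inj _), Set.ncard_image_of_injective _ (cons_inj _)]
  rw [Set.disjoint_left]
  rintro w ⟨w1, -, rfl⟩ ⟨w2, -, h⟩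
  injection h with h1 h2
  simp at h1

lemma uDyck_zero_succ (n : ℕ) : uDyck 0 (n+1) = uDyck 1 n := by
  have hset : S 0 (n+1) = (fun w => Letter.a :: w) '' S 1 n := by
    ext w
    constructor
    · rintro ⟨hl, hd⟩
      rcases w with _ | ⟨x, w'⟩
      · simp at hl
      · cases x
        · refine ⟨w', ⟨by simpa using hl, ?_⟩, rfl⟩
          rwa [← rep_cons_a]
        · exfalso
          rw [mem_dyck_iff] at hd
          have := hd.2 [Letter.b] (by rw [List.cons_prefix_cons]; exact ⟨rfl, List.nil_prefix⟩)
          simp at this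
    · rintro ⟨w', ⟨hl, hd⟩, rfl⟩
      exact ⟨by simpa using hl, by rwa [rep_cons_a]⟩
  rw [uDyck_eq, uDyck_eq, hset, Set.ncard_image_of_injective _ (cons_inj _)]

end DyckAux
namespace DyckAux

lemma choose_pascal (n k : ℕ) :
    (n + 1).choose (k + 1) = n.choose k + n.choose (k + 1) :=
  Nat.choose_succ_succ' n k

lemma closedForm : ∀ i m d : ℕ, m + d = i →
    ((uDyck (2*m) (2*i) : ℤ) = (2*i).choose d - (2*i).choose (i+m+1)
     ∧ (uDyck (2*m+1) (2*i+1) : ℤ) = (2*i+1).choose d - (2*i+1).choose (i+m+2)) := by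
  intro i
  induction i with
  | zero =>
    intro m d h
    obtain ⟨rfl, rfl⟩ : m = 0 ∧ d = 0 := by omega
    have h1 := uDyck_succ_succ 0 0
    have h2 : uDyck 2 0 = 0 := uDyck_eq_zero_of_lt (show 0 < 2 by omega)
    have h3 := uDyck_zero_zero
    norm_num at h1 ⊢
    constructor
    · omega
    · omega
  | succ i ih =>
    have E : ∀ m d : ℕ, m + d = i + 1 → (uDyck (2*m) (2*(i+1)) : ℤ)
        = (2*(i+1)).choose d - (2*(i+1)).choose ((i+1)+m+1) := by
      intro m d hmd
      rcases m with _ | m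
      · -- m = 0, d = i+1
        obtain rfl : d = i + 1 := by omega
        have h0 : uDyck (2*0) (2*(i+1)) = uDyck (2*0+1) (2*i+1) := by
          rw [show (2*0 : ℕ) = 0 from rfl, show 2*(i+1) = (2*i+1)+1 by ring,
            show (2*0+1 : ℕ) = 1 from rfl, uDyck_zero_succ]
        have hodd := (ih 0 i (by omega)).2
        have hb1 : (2*(i+1)).choose (i+1) = (2*i+1).choose i + (2*i+1).choose (i+1) := by
          rw [show 2*(i+1) = (2*i+1)+1 by ring]; exact choose_pascal _ _
        have hb2 : (2*(i+1)).choose ((i+1)+0+1) = (2*i+1).choose (i+0+1) + (2*i+1).choose (i+0+2) := by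
          rw [show 2*(i+1) = (2*i+1)+1 by ring, show (i+1)+0+1 = (i+0+1)+1 by ring]
          exact choose_pascal _ _
        have hb3 : (i:ℕ)+0+1 = i+1 := by ring
        rw [h0, hodd, hb1, hb2, hb3]
        push_cast
        try ring
      · -- m+1
        have hrec : uDyck (2*(m+1)) (2*(i+1)) = uDyck (2*m+3) (2*i+1) + uDyck (2*m+1) (2*i+1) := by
          rw [show 2*(m+1) = (2*m+1)+1 by ring, show 2*(i+1) = (2*i+1)+1 by ring,
            uDyck_succ_succ]
        rcases Nat.eq_zero_or_pos d with rfl | hd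
        · -- d = 0, m = i
          obtain rfl : m = i := by omega
          have h0 : uDyck (2*m+3) (2*m+1) = 0 := uDyck_eq_zero_of_lt (by omega)
          have h2 := (ih m 0 (by omega)).2
          have hc1 : (2*m+1).choose (m+m+2) = 0 := Nat.choose_eq_zero_of_lt (by omega)
          have hc2 : (2*(m+1)).choose ((m+1)+(m+1)+1) = 0 := Nat.choose_eq_zero_of_lt (by omega)
          rw [show (m:ℕ)+m+2 = m+m+2 from rfl] at h2
          rw [hc1, Nat.choose_zero_right] at h2
          rw [hrec, h0, hc2, Nat.choose_zero_right]
          push_cast at h2 ⊢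
          omega
        · -- d ≥ 1: m+1+d = i+1, so i = m + d
          obtain ⟨e, rfl⟩ : ∃ e, d = e + 1 := ⟨d - 1, by omega⟩
          have hi : m + 1 + e = i := by omega
          have h1 := (ih (m+1) e (by omega)).2
          have h2 := (ih m (e+1) (by omega)).2
          rw [show 2*(m+1)+1 = 2*m+3 by ring] at h1
          have hb1 : (2*(i+1)).choose (e+1) = (2*i+1).choose e + (2*i+1).choose (e+1) := by
            rw [show 2*(i+1) = (2*i+1)+1 by ring]; exact choose_pascal _ _
          have hb2 : (2*(i+1)).choose ((i+1)+(m+1)+1)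
              = (2*i+1).choose (i+(m+1)+1) + (2*i+1).choose (i+(m+1)+2) := by
            rw [show 2*(i+1) = (2*i+1)+1 by ring, show (i+1)+(m+1)+1 = (i+(m+1)+1)+1 by ring]
            exact choose_pascal _ _
          rw [show (i:ℕ)+m+2 = i+(m+1)+1 by ring] at h2
          rw [hrec, hb1, hb2]
          push_cast at h1 h2 ⊢
          omega
    refine fun m d hmd => ⟨E m d hmd, ?_⟩
    -- odd at i+1
    have hrec : uDyck (2*m+1) (2*(i+1)+1) = uDyck (2*(m+1)) (2*(i+1)) + uDyck (2*m) (2*(i+1)) := by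
      rw [show 2*(i+1)+1 = (2*(i+1))+1 from rfl, uDyck_succ_succ,
        show 2*(m+1) = 2*m+2 by ring]
    rcases Nat.eq_zero_or_pos d with rfl | hd
    · -- d = 0, m = i+1
      obtain rfl : m = i + 1 := by omega
      have h0 : uDyck (2*((i+1)+1)) (2*(i+1)) = 0 := uDyck_eq_zero_of_lt (by omega)
      have h0' : uDyck (2*(i+1)+2) (2*(i+1)) = 0 := by
        rw [show 2*(i+1)+2 = 2*((i+1)+1) by ring]; exact h0
      have h2 := E (i+1) 0 (by omega)
      have hc1 : (2*(i+1)).choose ((i+1)+(i+1)+1) = 0 := Nat.choose_eq_zero_of_lt (by omega)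
      have hc2 : (2*(i+1)+1).choose ((i+1)+(i+1)+2) = 0 := Nat.choose_eq_zero_of_lt (by omega)
      rw [hrec, show 2*((i+1)+1) = 2*(i+1)+2 by ring, h0', hc2]
      rw [hc1, Nat.choose_zero_right] at h2
      rw [Nat.choose_zero_right]
      push_cast at h2 ⊢
      omega
    · -- d ≥ 1
      obtain ⟨e, rfl⟩ : ∃ e, d = e + 1 := ⟨d - 1, by omega⟩
      have h1 := E (m+1) e (by omega)
      have h2 := E m (e+1) (by omega)
      have hb1 : (2*(i+1)+1).choose (e+1) = (2*(i+1)).choose e + (2*(i+1)).choose (e+1) :=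
        choose_pascal _ _
      have hb2 : (2*(i+1)+1).choose ((i+1)+m+2)
          = (2*(i+1)).choose ((i+1)+m+1) + (2*(i+1)).choose ((i+1)+m+2) := by
        rw [show (i+1)+m+2 = ((i+1)+m+1)+1 by ring]
        exact choose_pascal _ _
      have hb3 : ((i:ℕ)+1)+(m+1)+1 = (i+1)+m+2 := by ring
      rw [hb3] at h1
      rw [hrec, hb1, hb2]
      push_cast at h1 h2 ⊢
      omega

lemma closedFormEvenR {m i : ℕ} (h : m ≤ i) :
    (uDyck (2*m) (2*i) : ℝ) = ((2*i).choose (i-m) : ℝ) - ((2*i).choose (i+m+1) : ℝ) := by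
  have := (closedForm i m (i-m) (by omega)).1
  exact_mod_cast this

lemma closedFormOddR {m i : ℕ} (h : m ≤ i) :
    (uDyck (2*m+1) (2*i+1) : ℝ) = ((2*i+1).choose (i-m) : ℝ) - ((2*i+1).choose (i+m+2) : ℝ) := by
  have := (closedForm i m (i-m) (by omega)).2
  exact_mod_cast this

end DyckAux
namespace DyckAux

open Finset Filter Real Topology

/-! ### Central binomial decay -/

lemma cb_sq_le (N : ℕ) : (Nat.centralBinom N)^2 * (2*N+1) ≤ 16^N := by
  induction N with
  | zero => simp [Nat.centralBinom]
  | succ N ih =>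
    have h := Nat.succ_mul_centralBinom_succ N
    have key : (N+1)^2 * ((Nat.centralBinom (N+1))^2 * (2*(N+1)+1)) ≤ (N+1)^2 * 16^(N+1) := by
      have e1 : (N+1)^2 * ((Nat.centralBinom (N+1))^2 * (2*(N+1)+1))
          = ((N+1) * Nat.centralBinom (N+1))^2 * (2*N+3) := by ring
      rw [e1, h]
      have e2 : (2*(2*N+1)*Nat.centralBinom N)^2 * (2*N+3)
          = (4*(2*N+1)*(2*N+3)) * ((Nat.centralBinom N)^2 * (2*N+1)) := by ring
      rw [e2]
      calc (4*(2*N+1)*(2*N+3)) * ((Nat.centralBinom N)^2 * (2*N+1))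
          ≤ (4*(2*N+1)*(2*N+3)) * 16^N := Nat.mul_le_mul le_rfl ih
        _ ≤ (16*(N+1)^2) * 16^N := Nat.mul_le_mul (by nlinarith) le_rfl
        _ = (N+1)^2 * 16^(N+1) := by ring
    exact Nat.le_of_mul_le_mul_left key (by positivity)

lemma cb_tendsto :
    Tendsto (fun N : ℕ => ((2*N).choose N : ℝ) / 4^N) atTop (𝓝 0) := by
  have hb : ∀ N : ℕ, ((2*N).choose N : ℝ) / 4^N ≤ Real.sqrt (1/(2*N+1)) := by
    intro N
    have h := cb_sq_le N
    have hnn : (0:ℝ) ≤ ((2*N).choose N : ℝ) / 4^N := by positivity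
    have hsq : (((2*N).choose N : ℝ) / 4^N)^2 ≤ 1/(2*N+1) := by
      rw [div_pow, div_le_div_iff₀ (by positivity) (by positivity)]
      have : ((4:ℝ)^N)^2 = 16^N := by
        rw [← pow_mul, show (16:ℝ) = 4^2 by norm_num, ← pow_mul, Nat.mul_comm]
      rw [one_mul, this]
      have := h
      have hc : ((Nat.centralBinom N)^2 * (2*N+1) : ℝ) ≤ (16:ℝ)^N := by exact_mod_cast this
      calc (((2*N).choose N : ℝ))^2 * (2*↑N+1)
          = ((Nat.centralBinom N)^2 * (2*N+1) : ℝ) := by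
            rw [show Nat.centralBinom N = (2*N).choose N from rfl]
        _ ≤ (16:ℝ)^N := hc
    calc ((2*N).choose N : ℝ) / 4^N
        = Real.sqrt ((((2*N).choose N : ℝ) / 4^N)^2) := (Real.sqrt_sq hnn).symm
      _ ≤ Real.sqrt (1/(2*N+1)) := Real.sqrt_le_sqrt hsq
  have hg : Tendsto (fun N : ℕ => Real.sqrt (1/(2*N+1))) atTop (𝓝 0) := by
    have h1 : Tendsto (fun N : ℕ => ((2*N+1 : ℝ))) atTop atTop := by
      apply Filter.tendsto_atTop_mono (fun N : ℕ => by
        show (N:ℝ) ≤ 2*N+1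
        have : (0:ℝ) ≤ (N:ℝ) := Nat.cast_nonneg N
        linarith) tendsto_natCast_atTop_atTop
    have h2 : Tendsto (fun N : ℕ => 1/((2*N+1 : ℝ))) atTop (𝓝 0) := by
      simpa [one_div, Pi.inv_def] using h1.inv_tendsto_atTop
    simpa using h2.sqrt
  exact squeeze_zero (fun N => by positivity) hb hg

/-! ### The tail functions -/

noncomputable def tE (m N : ℕ) : ℝ :=
  (2 * ((2*N).choose N : ℝ) + 4 * ∑ j ∈ Finset.range m, ((2*N).choose (N+1+j) : ℝ)) / 4^N

noncomputable def tO (m N : ℕ) : ℝ :=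
  (4 * ∑ j ∈ Finset.range (m+1), ((2*N+1).choose (N+1+j) : ℝ)) / 4^N

lemma tE_nonneg (m N : ℕ) : 0 ≤ tE m N := by
  unfold tE
  have : (0:ℝ) ≤ ∑ j ∈ Finset.range m, ((2*N).choose (N+1+j) : ℝ) :=
    Finset.sum_nonneg fun j _ => by positivity
  positivity

lemma tO_nonneg (m N : ℕ) : 0 ≤ tO m N := by
  unfold tO
  have : (0:ℝ) ≤ ∑ j ∈ Finset.range (m+1), ((2*N+1).choose (N+1+j) : ℝ) :=
    Finset.sum_nonneg fun j _ => by positivity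
  positivity

lemma tE_tendsto (m : ℕ) : Tendsto (tE m) atTop (𝓝 0) := by
  have hb : ∀ N : ℕ, tE m N ≤ (4*(m:ℝ)+2) * (((2*N).choose N : ℝ) / 4^N) := by
    intro N
    have hsum : ∑ j ∈ Finset.range m, ((2*N).choose (N+1+j) : ℝ)
        ≤ ∑ j ∈ Finset.range m, ((2*N).choose N : ℝ) := by
      apply Finset.sum_le_sum
      intro j _
      have := Nat.choose_le_middle (N+1+j) (2*N)
      rw [show 2*N/2 = N by omega] at this
      exact_mod_cast this
    rw [Finset.sum_const, Finset.card_range, nsmul_eq_mul] at hsum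
    have hnum : 2 * ((2*N).choose N : ℝ) + 4 * ∑ j ∈ Finset.range m, ((2*N).choose (N+1+j) : ℝ)
        ≤ (4*(m:ℝ)+2) * ((2*N).choose N : ℝ) := by nlinarith
    calc tE m N = (2 * ((2*N).choose N : ℝ)
          + 4 * ∑ j ∈ Finset.range m, ((2*N).choose (N+1+j) : ℝ)) / 4^N := rfl
      _ ≤ ((4*(m:ℝ)+2) * ((2*N).choose N : ℝ)) / 4^N := by gcongr
      _ = (4*(m:ℝ)+2) * (((2*N).choose N : ℝ) / 4^N) := by ring
  have hg : Tendsto (fun N : ℕ => (4*(m:ℝ)+2) * (((2*N).choose N : ℝ) / 4^N)) atTop (𝓝 0) := by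
    simpa using cb_tendsto.const_mul (4*(m:ℝ)+2)
  exact squeeze_zero (tE_nonneg m) hb hg

lemma tO_tendsto (m : ℕ) : Tendsto (tO m) atTop (𝓝 0) := by
  have hkey : ∀ N : ℕ, ((2*N+1).choose N : ℝ) ≤ 2 * ((2*N).choose N : ℝ) := by
    intro N
    have h1 : (2*N+1).choose N = (2*N+1).choose (N+1) := (Nat.choose_symm_half N).symm
    have h2 : (2*N+1).choose (N+1) = (2*N).choose N + (2*N).choose (N+1) :=
      Nat.choose_succ_succ' (2*N) N
    have h3 : (2*N).choose (N+1) ≤ (2*N).choose N := by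
      have := Nat.choose_le_middle (N+1) (2*N)
      rwa [show 2*N/2 = N by omega] at this
    have : (2*N+1).choose N ≤ 2 * ((2*N).choose N) := by omega
    exact_mod_cast this
  have hb : ∀ N : ℕ, tO m N ≤ (8*(m:ℝ)+8) * (((2*N).choose N : ℝ) / 4^N) := by
    intro N
    have hsum : ∑ j ∈ Finset.range (m+1), ((2*N+1).choose (N+1+j) : ℝ)
        ≤ ∑ j ∈ Finset.range (m+1), 2 * ((2*N).choose N : ℝ) := by
      apply Finset.sum_le_sum
      intro j _
      refine le_trans ?_ (hkey N)
      have := Nat.choose_le_middle (N+1+j) (2*N+1)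
      rw [show (2*N+1)/2 = N by omega] at this
      exact_mod_cast this
    rw [Finset.sum_const, Finset.card_range, nsmul_eq_mul] at hsum
    have hnum : 4 * ∑ j ∈ Finset.range (m+1), ((2*N+1).choose (N+1+j) : ℝ)
        ≤ (8*(m:ℝ)+8) * ((2*N).choose N : ℝ) := by
      push_cast at hsum
      nlinarith
    calc tO m N = (4 * ∑ j ∈ Finset.range (m+1), ((2*N+1).choose (N+1+j) : ℝ)) / 4^N := rfl
      _ ≤ ((8*(m:ℝ)+8) * ((2*N).choose N : ℝ)) / 4^N := by gcongr
      _ = (8*(m:ℝ)+8) * (((2*N).choose N : ℝ) / 4^N) := by ring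
  have hg : Tendsto (fun N : ℕ => (8*(m:ℝ)+8) * (((2*N).choose N : ℝ) / 4^N)) atTop (𝓝 0) := by
    simpa using cb_tendsto.const_mul (8*(m:ℝ)+8)
  exact squeeze_zero (tO_nonneg m) hb hg

end DyckAux
namespace DyckAux

open Finset Filter Real Topology

/-! ### Telescoping steps -/

lemma pascal2_even (i j : ℕ) :
    (2*(i+1)).choose ((i+1)+1+j)
      = (2*i).choose (i+j) + 2*((2*i).choose (i+j+1)) + (2*i).choose (i+j+2) := by
  rw [show 2*(i+1) = (2*i+1)+1 by ring, show (i+1)+1+j = (i+j+1)+1 by ring,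
    choose_pascal (2*i+1) (i+j+1), choose_pascal (2*i) (i+j), choose_pascal (2*i) (i+j+1),
    show (i+j+1)+1 = i+j+2 from rfl]
  ring

lemma pascal2_odd (i j : ℕ) :
    (2*(i+1)+1).choose ((i+1)+1+j)
      = (2*i+1).choose (i+j) + 2*((2*i+1).choose (i+j+1)) + (2*i+1).choose (i+j+2) := by
  rw [show 2*(i+1)+1 = ((2*i+1)+1)+1 by ring, show (i+1)+1+j = (i+j+1)+1 by ring,
    choose_pascal ((2*i+1)+1) (i+j+1), choose_pascal (2*i+1) (i+j), choose_pascal (2*i+1) (i+j+1),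
    show (i+j+1)+1 = i+j+2 from rfl]
  ring

lemma central_pascal (i : ℕ) :
    (2*(i+1)).choose (i+1) = 2*((2*i).choose i + (2*i).choose (i+1)) := by
  rw [show 2*(i+1) = (2*i+1)+1 by ring, choose_pascal (2*i+1) i, ← Nat.choose_symm_half i,
    choose_pascal (2*i) i]
  ring

lemma tE_step (m : ℕ) {i : ℕ} (h : m ≤ i) :
    tE m i - tE m (i+1) = (((2*i).choose (i-m) : ℝ) - ((2*i).choose (i+m+1) : ℝ)) / 4^i := by
  have hsymm : ((2*i).choose (i-m) : ℝ) = ((2*i).choose (i+m) : ℝ) := by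
    rw [show i-m = 2*i - (i+m) by omega, Nat.choose_symm (by omega)]
  have hterm : ∀ j ∈ Finset.range m, ((2*(i+1)).choose ((i+1)+1+j) : ℝ)
      = 4 * ((2*i).choose (i+1+j) : ℝ)
        - (((((2*i).choose (i+(j+1)) : ℝ)) - ((2*i).choose (i+(j+1)+1) : ℝ))
           - ((((2*i).choose (i+j) : ℝ)) - ((2*i).choose (i+j+1) : ℝ))) := by
    intro j _
    rw [pascal2_even i j, show i+(j+1) = i+j+1 by ring, show (i+j+1)+1 = i+j+2 from rfl,
      show i+1+j = i+j+1 by ring]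
    push_cast
    ring
  have e1 : ∑ j ∈ Finset.range m, ((2*(i+1)).choose ((i+1)+1+j) : ℝ)
      = 4 * ∑ j ∈ Finset.range m, ((2*i).choose (i+1+j) : ℝ)
        - ((((2*i).choose (i+m) : ℝ) - ((2*i).choose (i+m+1) : ℝ))
           - (((2*i).choose (i+0) : ℝ) - ((2*i).choose (i+0+1) : ℝ))) := by
    rw [Finset.sum_congr rfl hterm, Finset.sum_sub_distrib,
      Finset.sum_range_sub (fun j => (((2*i).choose (i+j) : ℝ)) - ((2*i).choose (i+j+1) : ℝ)),
      ← Finset.mul_sum]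
  have hcR : ((2*(i+1)).choose (i+1) : ℝ) = 2*(((2*i).choose i : ℝ) + ((2*i).choose (i+1) : ℝ)) := by
    rw [central_pascal i]
    push_cast
    ring
  have key : 2 * ((2*(i+1)).choose (i+1) : ℝ)
        + 4 * ∑ j ∈ Finset.range m, ((2*(i+1)).choose ((i+1)+1+j) : ℝ)
      = 4*(2 * ((2*i).choose i : ℝ) + 4 * ∑ j ∈ Finset.range m, ((2*i).choose (i+1+j) : ℝ))
        - 4*(((2*i).choose (i+m) : ℝ) - ((2*i).choose (i+m+1) : ℝ)) := by
    rw [e1, hcR, show (i:ℕ)+0 = i from rfl, show (i:ℕ)+0+1 = i+1 from rfl]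
    ring
  have h4 : (0:ℝ) < 4^i := by positivity
  have h4' : (0:ℝ) < 4^(i+1) := by positivity
  rw [hsymm]
  unfold tE
  rw [div_sub_div _ _ (ne_of_gt h4) (ne_of_gt h4'), div_eq_div_iff (by positivity) (ne_of_gt h4)]
  rw [show (4:ℝ)^(i+1) = 4*4^i by ring]
  linear_combination (-((4:ℝ)^i * 4^i)) * key

lemma tO_step (m : ℕ) {i : ℕ} (h : m ≤ i) :
    tO m i - tO m (i+1) = (((2*i+1).choose (i-m) : ℝ) - ((2*i+1).choose (i+m+2) : ℝ)) / 4^i := by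
  have hsymm : ((2*i+1).choose (i-m) : ℝ) = ((2*i+1).choose (i+m+1) : ℝ) := by
    rw [show i-m = (2*i+1) - (i+m+1) by omega, Nat.choose_symm (by omega)]
  have hzero : ((2*i+1).choose (i+0) : ℝ) - ((2*i+1).choose (i+0+1) : ℝ) = 0 := by
    rw [show (i:ℕ)+0 = i from rfl, show (i:ℕ)+0+1 = i+1 from rfl, ← Nat.choose_symm_half i]
    ring
  have hterm : ∀ j ∈ Finset.range (m+1), ((2*(i+1)+1).choose ((i+1)+1+j) : ℝ)
      = 4 * ((2*i+1).choose (i+1+j) : ℝ)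
        - (((((2*i+1).choose (i+(j+1)) : ℝ)) - ((2*i+1).choose (i+(j+1)+1) : ℝ))
           - ((((2*i+1).choose (i+j) : ℝ)) - ((2*i+1).choose (i+j+1) : ℝ))) := by
    intro j _
    rw [pascal2_odd i j, show i+(j+1) = i+j+1 by ring, show (i+j+1)+1 = i+j+2 from rfl,
      show i+1+j = i+j+1 by ring]
    push_cast
    ring
  have e1 : ∑ j ∈ Finset.range (m+1), ((2*(i+1)+1).choose ((i+1)+1+j) : ℝ)
      = 4 * ∑ j ∈ Finset.range (m+1), ((2*i+1).choose (i+1+j) : ℝ)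
        - ((((2*i+1).choose (i+(m+1)) : ℝ) - ((2*i+1).choose (i+(m+1)+1) : ℝ))
           - (((2*i+1).choose (i+0) : ℝ) - ((2*i+1).choose (i+0+1) : ℝ))) := by
    rw [Finset.sum_congr rfl hterm, Finset.sum_sub_distrib,
      Finset.sum_range_sub (fun j => (((2*i+1).choose (i+j) : ℝ)) - ((2*i+1).choose (i+j+1) : ℝ)),
      ← Finset.mul_sum]
  have key : 4 * ∑ j ∈ Finset.range (m+1), ((2*(i+1)+1).choose ((i+1)+1+j) : ℝ)
      = 4*(4 * ∑ j ∈ Finset.range (m+1), ((2*i+1).choose (i+1+j) : ℝ))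
        - 4*(((2*i+1).choose (i+m+1) : ℝ) - ((2*i+1).choose (i+m+2) : ℝ)) := by
    rw [e1, show (i:ℕ)+(m+1) = i+m+1 by ring, show (i+m+1)+1 = i+m+2 from rfl]
    rw [show (i:ℕ)+0 = i from rfl, show (i:ℕ)+0+1 = i+1 from rfl] at hzero ⊢
    nlinarith [hzero]
  have h4 : (0:ℝ) < 4^i := by positivity
  have h4' : (0:ℝ) < 4^(i+1) := by positivity
  rw [hsymm]
  unfold tO
  rw [div_sub_div _ _ (ne_of_gt h4) (ne_of_gt h4'), div_eq_div_iff (by positivity) (ne_of_gt h4)]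
  rw [show (4:ℝ)^(i+1) = 4*4^i by ring]
  linear_combination (-((4:ℝ)^i * 4^i)) * key

/-! ### Base values -/

lemma half_row_even (n : ℕ) :
    (2*n).choose n + 2 * ∑ j ∈ Finset.range n, (2*n).choose (n+1+j) = 4^n := by
  have htot := Nat.sum_range_choose (2*n)
  have hsplit : ∑ i ∈ Finset.range (2*n+1), (2*n).choose i
      = ∑ i ∈ Finset.range n, (2*n).choose i
        + ∑ i ∈ Finset.range (n+1), (2*n).choose (n+i) := by
    rw [show 2*n+1 = n + (n+1) by ring, Finset.sum_range_add]
  have hrefl : ∑ i ∈ Finset.range n, (2*n).choose i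
      = ∑ j ∈ Finset.range n, (2*n).choose (n+1+j) := by
    rw [← Finset.sum_range_reflect (fun j => (2*n).choose (n+1+j)) n]
    apply Finset.sum_congr rfl
    intro i hi
    rw [Finset.mem_range] at hi
    rw [show n+1+(n-1-i) = 2*n - i by omega]
    exact (Nat.choose_symm (by omega)).symm
  have hsec : ∑ i ∈ Finset.range (n+1), (2*n).choose (n+i)
      = ∑ i ∈ Finset.range n, (2*n).choose (n+1+i) + (2*n).choose n := by
    rw [Finset.sum_range_succ' (fun i => (2*n).choose (n+i)) n]
    congr 1
    · apply Finset.sum_congr rfl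
      intro i _
      rw [show n+(i+1) = n+1+i by omega]
  rw [hsplit, hrefl, hsec] at htot
  have h4 : (4:ℕ)^n = 2^(2*n) := by
    rw [show (4:ℕ) = 2^2 by norm_num, ← pow_mul]
  omega

lemma half_row_odd (n : ℕ) :
    ∑ j ∈ Finset.range (n+1), (2*n+1).choose (n+1+j) = 4^n := by
  rw [← Nat.sum_range_choose_halfway n]
  rw [← Finset.sum_range_reflect (fun j => (2*n+1).choose (n+1+j)) (n+1)]
  apply Finset.sum_congr rfl
  intro i hi
  rw [Finset.mem_range] at hi
  rw [show n+1+(n+1-1-i) = (2*n+1) - i by omega]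
  exact Nat.choose_symm (by omega)

lemma tE_base (m : ℕ) : tE m (m+1) = 2 - 1/4^m := by
  have hG := half_row_even (m+1)
  rw [Finset.sum_range_succ, show (m+1)+1+m = 2*(m+1) by ring, Nat.choose_self] at hG
  have hGR : ((2*(m+1)).choose (m+1) : ℝ)
      + 2*(∑ j ∈ Finset.range m, ((2*(m+1)).choose ((m+1)+1+j) : ℝ) + 1) = 4^(m+1) := by
    exact_mod_cast hG
  unfold tE
  rw [show (4:ℝ)^(m+1) = 4*4^m by ring] at hGR ⊢
  have h4 : (0:ℝ) < 4^m := by positivity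
  field_simp
  nlinarith [hGR, h4]

lemma tO_base (m : ℕ) : tO m (m+1) = 4 - 1/4^m := by
  have hG := half_row_odd (m+1)
  rw [Finset.sum_range_succ, show (m+1)+1+(m+1) = 2*(m+1)+1 by ring, Nat.choose_self] at hG
  have hGR : (∑ j ∈ Finset.range (m+1), ((2*(m+1)+1).choose ((m+1)+1+j) : ℝ)) + 1 = 4^(m+1) := by
    exact_mod_cast hG
  unfold tO
  rw [show (4:ℝ)^(m+1) = 4*4^m by ring] at hGR ⊢
  have h4 : (0:ℝ) < 4^m := by positivity
  field_simp
  nlinarith [hGR, h4]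

end DyckAux
namespace DyckAux

open Finset Filter Real Topology

noncomputable def fE (m : ℕ) : ℕ → ℝ :=
  fun i => if m ≤ i then (uDyck (2 * m) (2 * i) : ℝ) / 4 ^ i else 0

noncomputable def fO (m : ℕ) : ℕ → ℝ :=
  fun i => if m ≤ i then (uDyck (2 * m + 1) (2 * i + 1) : ℝ) / 4 ^ i else 0

lemma fE_nonneg (m i : ℕ) : 0 ≤ fE m i := by
  unfold fE; split <;> positivity

lemma fO_nonneg (m i : ℕ) : 0 ≤ fO m i := by
  unfold fO; split <;> positivity

lemma partialE (m : ℕ) : ∀ N, m + 1 ≤ N → ∑ i ∈ Finset.range N, fE m i = 2 - tE m N := by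
  refine Nat.le_induction ?_ ?_
  · rw [Finset.sum_range_succ]
    have h0 : ∑ i ∈ Finset.range m, fE m i = 0 :=
      Finset.sum_eq_zero fun i hi => by
        rw [Finset.mem_range] at hi
        exact if_neg (by omega)
    rw [h0, zero_add]
    show (if m ≤ m then (uDyck (2 * m) (2 * m) : ℝ) / 4 ^ m else 0) = 2 - tE m (m+1)
    rw [if_pos le_rfl, closedFormEvenR le_rfl, show m - m = 0 by omega,
      Nat.choose_zero_right, Nat.choose_eq_zero_of_lt (show 2*m < m+m+1 by omega), tE_base]
    norm_num
  · intro N hN ih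
    rw [Finset.sum_range_succ, ih]
    show 2 - tE m N + (if m ≤ N then (uDyck (2 * m) (2 * N) : ℝ) / 4 ^ N else 0) = 2 - tE m (N+1)
    rw [if_pos (by omega), closedFormEvenR (show m ≤ N by omega), ← tE_step m (show m ≤ N by omega)]
    ring

lemma partialO (m : ℕ) : ∀ N, m + 1 ≤ N → ∑ i ∈ Finset.range N, fO m i = 4 - tO m N := by
  refine Nat.le_induction ?_ ?_
  · rw [Finset.sum_range_succ]
    have h0 : ∑ i ∈ Finset.range m, fO m i = 0 :=
      Finset.sum_eq_zero fun i hi => by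
        rw [Finset.mem_range] at hi
        exact if_neg (by omega)
    rw [h0, zero_add]
    show (if m ≤ m then (uDyck (2 * m + 1) (2 * m + 1) : ℝ) / 4 ^ m else 0) = 4 - tO m (m+1)
    rw [if_pos le_rfl, closedFormOddR le_rfl, show m - m = 0 by omega,
      Nat.choose_zero_right, Nat.choose_eq_zero_of_lt (show 2*m+1 < m+m+2 by omega), tO_base]
    norm_num
  · intro N hN ih
    rw [Finset.sum_range_succ, ih]
    show 4 - tO m N + (if m ≤ N then (uDyck (2 * m + 1) (2 * N + 1) : ℝ) / 4 ^ N else 0)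
        = 4 - tO m (N+1)
    rw [if_pos (by omega), closedFormOddR (show m ≤ N by omega), ← tO_step m (show m ≤ N by omega)]
    ring

lemma hasSumE (m : ℕ) : HasSum (fE m) 2 := by
  rw [hasSum_iff_tendsto_nat_of_nonneg (fE_nonneg m)]
  have h1 : Tendsto (fun N : ℕ => 2 - tE m N) atTop (𝓝 2) := by
    simpa using tendsto_const_nhds.sub (tE_tendsto m)
  refine h1.congr' ?_
  filter_upwards [eventually_ge_atTop (m+1)] with N hN
  exact (partialE m N hN).symm

lemma hasSumO (m : ℕ) : HasSum (fO m) 4 := by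
  rw [hasSum_iff_tendsto_nat_of_nonneg (fO_nonneg m)]
  have h1 : Tendsto (fun N : ℕ => 4 - tO m N) atTop (𝓝 4) := by
    simpa using tendsto_const_nhds.sub (tO_tendsto m)
  refine h1.congr' ?_
  filter_upwards [eventually_ge_atTop (m+1)] with N hN
  exact (partialO m N hN).symm

end DyckAux

theorem stmt_19 (m : ℕ) :
    HasSum (fun i : ℕ => if m ≤ i then (uDyck (2 * m) (2 * i) : ℝ) / 4 ^ i else 0) 2 ∧
    HasSum (fun i : ℕ => if m ≤ i then (uDyck (2 * m + 1) (2 * i + 1) : ℝ) / 4 ^ i else 0) 4 :=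
  ⟨DyckAux.hasSumE m, DyckAux.hasSumO m⟩
end
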